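/- Let n be a positive integer, and let ρ, j, λ, δ ∈ ℝ with λ ≠ 0 and nj ≠ 1. Suppose u : (0,∞) × ℝ → ℝ is C³ and satisfies u_t + uⁿ u_x + (j/t) u + λ t^(ρ(1−nj)−nj) u_{xxx} = 0 for all t > 0 and x ∈ ℝ. Then the function v(t,x) = e^((ρ−2−3nj/(1−nj))δ) u( e^(−3nδ/(1−nj)) t, e^(−n(ρ+1)δ) x ) also satisfies v_t + vⁿ v_x + (j/t) v + λ t^(ρ(1−nj)−nj) v_{xxx} = 0 for all t > 0 and x ∈ ℝ. -/

import Mathlib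

/-- Partial derivative in `t` of `u = u(t,x)`. -/
noncomputable def pt (u : ℝ → ℝ → ℝ) (t x : ℝ) : ℝ := deriv (fun s => u s x) t
/-- Partial derivative in `x` of `u = u(t,x)`. -/
noncomputable def px (u : ℝ → ℝ → ℝ) (t x : ℝ) : ℝ := deriv (fun y => u t y) x
/-- Third partial derivative in `x` of `u = u(t,x)`. -/
noncomputable def pxxx (u : ℝ → ℝ → ℝ) (t x : ℝ) : ℝ := iteratedDeriv 3 (fun y => u t y) x
/-- The one-parameter Lie symmetry group generated by
`Γ = (3n/(1−nj)) t∂_t + n(ρ+1) x∂_x + (ρ−2−3nj/(1−nj)) u∂_u` maps solutions of the damped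
generalized KdV equation `u_t + uⁿ u_x + (j/t) u + λ t^{ρ(1−nj)−nj} u_{xxx} = 0`
(for `t > 0`) to solutions. -/
theorem stmt_18 (n : ℕ) (hn : 0 < n) (ρ j lam δ : ℝ) (hlam : lam ≠ 0)
    (hnj : (n:ℝ) * j ≠ 1)
    (u : ℝ → ℝ → ℝ)
    (hu : ContDiffOn ℝ 3 (fun p : ℝ × ℝ => u p.1 p.2) {p : ℝ × ℝ | 0 < p.1})
    (hpde : ∀ t, 0 < t → ∀ x : ℝ,
      pt u t x + (u t x) ^ n * px u t x + j / t * u t x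
        + lam * t ^ (ρ * (1 - (n:ℝ) * j) - (n:ℝ) * j) * pxxx u t x = 0)
    (v : ℝ → ℝ → ℝ)
    (hv : ∀ t x, v t x = Real.exp ((ρ - 2 - 3 * (n:ℝ) * j / (1 - (n:ℝ) * j)) * δ)
      * u (Real.exp (-3 * (n:ℝ) * δ / (1 - (n:ℝ) * j)) * t)
          (Real.exp (-(n:ℝ) * (ρ + 1) * δ) * x)) :
    ∀ t, 0 < t → ∀ x : ℝ,
      pt v t x + (v t x) ^ n * px v t x + j / t * v t x
        + lam * t ^ (ρ * (1 - (n:ℝ) * j) - (n:ℝ) * j) * pxxx v t x = 0 := by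
  intro t ht x
  have h1 : (1 : ℝ) - (n:ℝ) * j ≠ 0 := sub_ne_zero.mpr (Ne.symm hnj)
  set c := Real.exp ((ρ - 2 - 3 * (n:ℝ) * j / (1 - (n:ℝ) * j)) * δ) with hc
  set a := Real.exp (-3 * (n:ℝ) * δ / (1 - (n:ℝ) * j)) with ha
  set b := Real.exp (-(n:ℝ) * (ρ + 1) * δ) with hb
  set σ := ρ * (1 - (n:ℝ) * j) - (n:ℝ) * j with hσ
  have hapos : 0 < a := Real.exp_pos _
  have hbpos : 0 < b := Real.exp_pos _
  have ht' : 0 < a * t := mul_pos hapos ht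
  set t' := a * t with ht'def
  set x' := b * x with hx'def
  -- the x-slice is C³ on all of ℝ
  have hslice : ContDiff ℝ 3 (fun y => u t' y) := by
    rw [← contDiffOn_univ]
    exact hu.comp ((contDiff_const.prodMk contDiff_id).contDiffOn)
      (fun y _ => ht')
  have hfd : Differentiable ℝ (fun y => u t' y) := hslice.differentiable (by norm_num)
  -- differentiability of the t-slice at t'
  have hopen : IsOpen {p : ℝ × ℝ | 0 < p.1} := isOpen_lt continuous_const continuous_fst
  have hdiff : DifferentiableAt ℝ (fun p : ℝ × ℝ => u p.1 p.2) (t', x') :=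
    (hu.differentiableOn (by norm_num)).differentiableAt (hopen.mem_nhds ht')
  have hdt : DifferentiableAt ℝ (fun s => u s x') t' :=
    by have := hdiff.comp t' (f := fun s : ℝ => (s, x')) ((differentiableAt_id (x := t')).prodMk (differentiableAt_const x')); exact this
  -- time derivative of v
  have hpt : pt v t x = c * (pt u t' x' * a) := by
    have e : (fun s => v s x) = fun s => c * u (a * s) x' := funext fun s => hv s x
    have h1' : HasDerivAt (fun s : ℝ => a * s) a t := by
      simpa using (hasDerivAt_id t).const_mul a
    have h2 : HasDerivAt (fun s => u s x') (pt u t' x') t' := hdt.hasDerivAt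
    have := ((h2.comp t h1').const_mul c).deriv
    rw [pt, e]
    exact this
  -- space derivative of v
  have hpx : px v t x = c * (px u t' x' * b) := by
    have e : (fun y => v t y) = fun y => c * u t' (b * y) := funext fun y => hv t y
    have h1' : HasDerivAt (fun y : ℝ => b * y) b x := by
      simpa using (hasDerivAt_id x).const_mul b
    have h2 : HasDerivAt (fun y => u t' y) (px u t' x') x' := (hfd x').hasDerivAt
    have := ((h2.comp x h1').const_mul c).deriv
    rw [px, e]
    exact this
  -- third space derivative of v
  have hcf : ContDiff ℝ (3 : ℕ) (fun y => c * u t' y) := by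
    exact_mod_cast contDiff_const.mul hslice
  have hpxxx : pxxx v t x = b ^ 3 * (c * pxxx u t' x') := by
    have e : (fun y => v t y) = fun y => (fun z => c * u t' z) (b * y) :=
      funext fun y => hv t y
    rw [pxxx, e, iteratedDeriv_comp_const_mul hcf b]
    beta_reduce
    have : iteratedDeriv 3 (fun z => c * u t' z) (b * x)
        = c * iteratedDeriv 3 (fun z => u t' z) (b * x) := by
      simp_rw [← iteratedDerivWithin_univ]
      exact iteratedDerivWithin_const_mul (Set.mem_univ _) uniqueDiffOn_univ c
        (hslice.contDiffOn.contDiffWithinAt (Set.mem_univ _))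
    rw [this, pxxx]
  -- the exponent identities
  have E1 : c ^ n * b = a := by
    rw [hc, hb, ha, ← Real.exp_nat_mul, ← Real.exp_add, Real.exp_eq_exp]
    field_simp
    ring
  have haσ : a ^ σ = Real.exp (-3 * (n:ℝ) * δ / (1 - (n:ℝ) * j) * σ) := by
    rw [ha, ← Real.log_exp (-3 * (n:ℝ) * δ / (1 - (n:ℝ) * j)),
      ← Real.rpow_def_of_pos (Real.exp_pos _), Real.log_exp]
  have E3 : b ^ 3 = a * a ^ σ := by
    rw [haσ, hb, ha, ← Real.exp_nat_mul, ← Real.exp_add, Real.exp_eq_exp, hσ]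
    field_simp
    ring
  have Eab : t' ^ σ = a ^ σ * t ^ σ := by
    rw [ht'def, Real.mul_rpow hapos.le ht.le]
  have Ej : j / t = a * (j / t') := by
    rw [ht'def]
    field_simp
  -- assemble
  have hp := hpde t' ht' x'
  rw [Eab] at hp
  rw [hv t x, hpt, hpx, hpxxx, E3, ← ht'def, ← hx'def]
  linear_combination (c * a) * hp + (c * (u t' x') ^ n * px u t' x') * E1
    + (c * u t' x') * Ej
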